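/- Let T be a countably branching well-founded tree with associated tree of initial segments T̃, and let (μ_i)_{i∈ℕ} be a bounded and disjointly supported sequence in M_+(T̃). Then there exist a subsequence (μ_{i_n})_n of (μ_i)_i and a measure ν ∈ M_+(T̃) such that ν = succ-lim_n μ_{i_n}, i.e., ν({t̃}) = lim_n μ_{i_n}(S(t̃)) for every t̃ ∈ T̃. -/

import Mathlib

/-- A countably branching well-founded tree `T = (M, ≼)` on an infinite subset `M` of `ℕ`:
`≼` is a partial order on `M` compatible with the usual order, predecessor sets are finite
chains, there is no infinite totally ordered subset, and every non-maximal node has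
(countably) infinitely many immediate successors. -/
structure NatTree where
  M : Set ℕ
  infinite : M.Infinite
  r : ℕ → ℕ → Prop
  mem_left : ∀ {a b : ℕ}, r a b → a ∈ M
  mem_right : ∀ {a b : ℕ}, r a b → b ∈ M
  refl : ∀ a ∈ M, r a a
  antisymm : ∀ {a b : ℕ}, r a b → r b a → a = b
  trans : ∀ {a b c : ℕ}, r a b → r b c → r a c
  compat : ∀ {a b : ℕ}, r a b → a ≤ b
  pred_finite : ∀ a ∈ M, {b : ℕ | r b a}.Finite
  pred_chain : ∀ a ∈ M, ∀ {b c : ℕ}, r b a → r c a → r b c ∨ r c b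
  wellFounded : ∀ C : Set ℕ, C ⊆ M → (∀ a ∈ C, ∀ b ∈ C, r a b ∨ r b a) → C.Finite
  branching : ∀ a ∈ M, (∃ b, b ≠ a ∧ r a b) →
    {b : ℕ | r a b ∧ b ≠ a ∧ ∀ c, r a c → r c b → c = a ∨ c = b}.Infinite

/-- A bounded positive (countably additive) measure defined on all subsets of `α`. -/
structure PosMeasure (α : Type*) where
  m : Set α → ℝ
  nonneg : ∀ A, 0 ≤ m A
  empty : m ∅ = 0
  cadd : ∀ A : ℕ → Set α, (Pairwise fun i j => Disjoint (A i) (A j)) →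
    HasSum (fun i => m (A i)) (m (⋃ i, A i))

/-- The support of a positive measure: the set of atoms of positive mass. -/
def suppM (μ : PosMeasure ℕ) : Set ℕ := {t | 0 < μ.m {t}}

/-- `V_t = {s : t ≼ s}`, the nodes above `t`. -/
def V (T : NatTree) (t : ℕ) : Set ℕ := {s | T.r t s}

/-- `S(t)`: the set of immediate successors of a node `t`. -/
def Succ (T : NatTree) (t : ℕ) : Set ℕ :=
  {s | T.r t s ∧ s ≠ t ∧ ∀ c, T.r t c → T.r c s → c = t ∨ c = s}

section Aux

open MeasureTheory Filter Topology

variable {α : Type*}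

lemma pm_add (ν : PosMeasure α) {X Y : Set α} (h : Disjoint X Y) :
    ν.m (X ∪ Y) = ν.m X + ν.m Y := by
  classical
  have hpd : Pairwise fun i j => Disjoint
      ((fun n => if n = 0 then X else if n = 1 then Y else (∅ : Set α)) i)
      ((fun n => if n = 0 then X else if n = 1 then Y else (∅ : Set α)) j) := by
    intro i j hij
    dsimp only
    rcases i with _ | _ | i <;> rcases j with _ | _ | j <;> simp_all [h, h.symm]
  have h1 := ν.cadd _ hpd
  have hU : (⋃ i, (fun n => if n = 0 then X else if n = 1 then Y else (∅ : Set α)) i)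
      = X ∪ Y := by
    apply subset_antisymm
    · intro x hx
      rcases Set.mem_iUnion.mp hx with ⟨i, hi⟩
      rcases i with _ | _ | i <;> simp_all
    · rintro x (hx | hx)
      · exact Set.mem_iUnion.mpr ⟨0, by simp [hx]⟩
      · exact Set.mem_iUnion.mpr ⟨1, by simp [hx]⟩
  rw [hU] at h1
  have h2 : HasSum (fun i => ν.m ((fun n =>
      if n = 0 then X else if n = 1 then Y else (∅ : Set α)) i)) (ν.m X + ν.m Y) := by
    have hz : ∀ i ∉ ({0, 1} : Finset ℕ), ν.m ((fun n =>
        if n = 0 then X else if n = 1 then Y else (∅ : Set α)) i) = 0 := by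
      intro i hi
      have hi' : i ≠ 0 ∧ i ≠ 1 := by simpa using hi
      simp [hi'.1, hi'.2, ν.empty]
    have := hasSum_sum_of_ne_finset_zero (s := ({0, 1} : Finset ℕ))
      (L := SummationFilter.unconditional ℕ) hz
    convert this using 1
    simp
  exact h1.unique h2

lemma pm_mono (ν : PosMeasure α) {X Y : Set α} (h : X ⊆ Y) : ν.m X ≤ ν.m Y := by
  have h1 : ν.m (X ∪ (Y \ X)) = ν.m X + ν.m (Y \ X) :=
    pm_add ν Set.disjoint_sdiff_right
  rw [Set.union_diff_cancel h] at h1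
  have := ν.nonneg (Y \ X)
  linarith

lemma pm_finset (ν : PosMeasure α) (f : ℕ → Set α) (F : Finset ℕ)
    (hd : ∀ s ∈ F, ∀ t ∈ F, s ≠ t → Disjoint (f s) (f t)) :
    ν.m (⋃ t ∈ F, f t) = ∑ t ∈ F, ν.m (f t) := by
  classical
  induction F using Finset.induction with
  | empty => simpa using ν.empty
  | @insert a F ha ih =>
    rw [Finset.set_biUnion_insert, pm_add ν, Finset.sum_insert ha,
      ih (fun s hs t ht hst => hd s (Finset.mem_insert_of_mem hs) t
        (Finset.mem_insert_of_mem ht) hst)]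
    rw [Set.disjoint_iUnion₂_right]
    intro t ht
    exact hd a (Finset.mem_insert_self a F) t (Finset.mem_insert_of_mem ht)
      (fun h => ha (h ▸ ht))

lemma succ_disjoint (T : NatTree) {s t : ℕ} (hst : s ≠ t) :
    Disjoint (Succ T s) (Succ T t) := by
  rw [Set.disjoint_left]
  rintro u ⟨hsu, hus, hmins⟩ ⟨htu, hut, hmint⟩
  have hu : u ∈ T.M := T.mem_right hsu
  rcases T.pred_chain u hu hsu htu with h | h
  · rcases hmins t h htu with h1 | h1
    · exact hst h1.symm
    · exact hut h1.symm
  · rcases hmint s h hsu with h1 | h1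
    · exact hst h1
    · exact hus h1.symm

lemma succ_empty (T : NatTree) {t : ℕ} (ht : t ∉ T.M) : Succ T t = ∅ := by
  ext s
  simp only [Succ, Set.mem_setOf_eq, Set.mem_empty_iff_false, iff_false]
  rintro ⟨h, -, -⟩
  exact ht (T.mem_left h)

end Aux

open MeasureTheory ENNReal

/-- every bounded and disjointly supported sequence `(μ_i)` of positive
measures on the tree admits a subsequence `(μ_{i_n})` and a measure `ν` with
`ν = succ-lim_n μ_{i_n}`, i.e. `ν({t}) = lim_n μ_{i_n}(S(t))` for every node `t`. -/
theorem stmt_11 (T : NatTree) (μ : ℕ → PosMeasure ℕ)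
    (hsupp : ∀ i, suppM (μ i) ⊆ T.M)
    (hdisj : ∀ i j : ℕ, i ≠ j → Disjoint (suppM (μ i)) (suppM (μ j)))
    (hbdd : ∃ B : ℝ, ∀ i, (μ i).m Set.univ ≤ B) :
    ∃ φ : ℕ → ℕ, StrictMono φ ∧ ∃ ν : PosMeasure ℕ, suppM ν ⊆ T.M ∧
      ∀ t ∈ T.M, Filter.Tendsto (fun n => (μ (φ n)).m (Succ T t))
        Filter.atTop (nhds (ν.m {t})) := by
  classical
  obtain ⟨B, hB⟩ := hbdd
  set x : ℕ → ℕ → ℝ := fun i t => (μ i).m (Succ T t) with hx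
  have hxmem : ∀ i, x i ∈ Set.pi Set.univ (fun _ : ℕ => Set.Icc (0 : ℝ) B) := by
    intro i t _
    exact ⟨(μ i).nonneg _, le_trans (pm_mono _ (Set.subset_univ _)) (hB i)⟩
  have hcpt : IsCompact (Set.pi Set.univ (fun _ : ℕ => Set.Icc (0 : ℝ) B)) :=
    isCompact_univ_pi (fun _ => isCompact_Icc)
  obtain ⟨a, ha, φ, hφ, htendall⟩ := hcpt.tendsto_subseq hxmem
  have htend : ∀ t, Filter.Tendsto (fun n => x (φ n) t) Filter.atTop (nhds (a t)) :=
    fun t => tendsto_pi_nhds.mp htendall t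
  have ha0 : ∀ t, 0 ≤ a t := fun t => (ha t trivial).1
  have hsumle : ∀ F : Finset ℕ, ∑ t ∈ F, a t ≤ B := by
    intro F
    have h1 : ∀ n, ∑ t ∈ F, x (φ n) t ≤ B := by
      intro n
      rw [show (∑ t ∈ F, x (φ n) t) = (μ (φ n)).m (⋃ t ∈ F, Succ T t) from
        (pm_finset (μ (φ n)) (Succ T) F (fun s _ t _ hst => succ_disjoint T hst)).symm]
      exact le_trans (pm_mono _ (Set.subset_univ _)) (hB _)
    have h2 : Filter.Tendsto (fun n => ∑ t ∈ F, x (φ n) t) Filter.atTop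
        (nhds (∑ t ∈ F, a t)) := tendsto_finset_sum _ (fun t _ => htend t)
    exact le_of_tendsto h2 (Filter.Eventually.of_forall h1)
  have hsummable : Summable a := summable_of_sum_le ha0 hsumle
  -- limits vanish off M
  have haM : ∀ t, t ∉ T.M → a t = 0 := by
    intro t ht
    have h0 : (fun n => x (φ n) t) = fun _ => (0 : ℝ) := by
      funext n
      simp only [hx, succ_empty T ht, (μ (φ n)).empty]
    exact tendsto_nhds_unique (h0 ▸ htend t) tendsto_const_nhds
  -- build the measure
  set aE : ℕ → ℝ≥0∞ := fun t => ENNReal.ofReal (a t) with haE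
  set κ : Measure ℕ := Measure.sum (fun t => aE t • Measure.dirac t) with hκ
  have hκsingle : ∀ t : ℕ, κ {t} = aE t := by
    intro t
    rw [hκ, Measure.sum_apply _ (MeasurableSet.singleton t)]
    have : ∀ s : ℕ, (aE s • Measure.dirac s) {t} = if s = t then aE s else 0 := by
      intro s
      rw [Measure.smul_apply, Measure.dirac_apply' s (MeasurableSet.singleton t)]
      by_cases hst : s = t <;> simp [hst]
    rw [tsum_congr this, tsum_eq_single t (by intro b hb; simp [hb])]
    simp
  have hκuniv : κ Set.univ = ENNReal.ofReal (∑' t, a t) := by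
    rw [hκ, Measure.sum_apply _ MeasurableSet.univ,
      ENNReal.ofReal_tsum_of_nonneg ha0 hsummable]
    apply tsum_congr
    intro t
    simp [haE]
  have hκfin : ∀ A : Set ℕ, κ A ≠ ⊤ := by
    intro A
    have h1 : κ A ≤ κ Set.univ := measure_mono (Set.subset_univ A)
    rw [hκuniv] at h1
    exact ne_top_of_le_ne_top ENNReal.ofReal_ne_top h1
  refine ⟨φ, hφ, ⟨fun A => (κ A).toReal, fun A => ENNReal.toReal_nonneg,
    by simp, ?_⟩, ?_, ?_⟩
  · -- countable additivity
    intro A hA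
    have hmeas : κ (⋃ i, A i) = ∑' i, κ (A i) :=
      measure_iUnion hA (fun i => MeasurableSet.of_discrete)
    have hne : (∑' i, κ (A i)) ≠ ⊤ := hmeas ▸ hκfin _
    have h3 := ENNReal.hasSum_toReal hne
    rw [hmeas, ENNReal.tsum_toReal_eq (fun i => hκfin (A i))]
    exact h3
  · -- support
    intro t ht
    by_contra htM
    have h1 : (κ {t}).toReal = 0 := by
      rw [hκsingle t]
      show (ENNReal.ofReal (a t)).toReal = 0
      rw [haM t htM]; simp
    simp only [suppM, Set.mem_setOf_eq] at ht
    rw [h1] at ht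
    exact lt_irrefl 0 ht
  · -- the limit
    intro t _
    have h1 : (κ {t}).toReal = a t := by
      rw [hκsingle t]
      show (ENNReal.ofReal (a t)).toReal = a t
      exact ENNReal.toReal_ofReal (ha0 t)
    dsimp only
    rw [h1]
    exact htend t
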